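/- Let n, m be natural numbers and let F : (Fin n → ℝ) → (Fin m → ℝ) be a differentiable map. Let S ⊆ (Fin n → ℝ) be a convex set, and let J_lo, J_hi be m × n real matrices such that for every x ∈ S and all indices i, j, the (i,j) entry of the Jacobian matrix of F at x (i.e., the j-th partial derivative of the i-th component of F at x) lies in the interval [J_lo i j, J_hi i j]. Then for all x, y ∈ S there exists an m × n real matrix A with J_lo i j ≤ A i j ≤ J_hi i j for all i, j, such that F y − F x = A *ᵥ (y − x) (matrix–vector multiplication). -/

import Mathlib

/-- Componentwise mean-value enclosure for the Jacobian of a differentiable map. -/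
theorem mean_value_jacobian_enclosure (n m : ℕ)
    (F : (Fin n → ℝ) → (Fin m → ℝ)) (hF : Differentiable ℝ F)
    (S : Set (Fin n → ℝ)) (hS : Convex ℝ S)
    (Jlo Jhi : Matrix (Fin m) (Fin n) ℝ)
    (hJ : ∀ x ∈ S, ∀ (i : Fin m) (j : Fin n),
      fderiv ℝ F x (Pi.single j 1) i ∈ Set.Icc (Jlo i j) (Jhi i j)) :
    ∀ x ∈ S, ∀ y ∈ S, ∃ A : Matrix (Fin m) (Fin n) ℝ,
      (∀ (i : Fin m) (j : Fin n), Jlo i j ≤ A i j ∧ A i j ≤ Jhi i j) ∧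
      F y - F x = A.mulVec (y - x) := by
  intro x hx y hy
  -- the segment
  set γ : ℝ → (Fin n → ℝ) := fun t => x + t • (y - x) with hγdef
  have hγS : ∀ t ∈ Set.Icc (0:ℝ) 1, γ t ∈ S := by
    intro t ht
    have : (1 - t) • x + t • y ∈ S := hS hx hy (by linarith [ht.2]) ht.1 (by ring)
    have heq : γ t = (1 - t) • x + t • y := by
      simp only [hγdef, smul_sub, sub_smul, one_smul]
      abel
    rw [heq]; exact this
  have hγd : ∀ t : ℝ, HasDerivAt γ (y - x) t := by
    intro t
    have h1 : HasDerivAt (fun t : ℝ => t • (y - x)) ((1:ℝ) • (y - x)) t :=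
      (hasDerivAt_id t).smul_const (y - x)
    simpa only [one_smul] using h1.const_add x
  have key : ∀ i : Fin m, ∃ ξ ∈ S, F y i - F x i = fderiv ℝ F ξ (y - x) i := by
    intro i
    have hg : ∀ t : ℝ, HasDerivAt (fun t => F (γ t) i)
        (fderiv ℝ F (γ t) (y - x) i) t := by
      intro t
      have hcomp : HasDerivAt (fun t => F (γ t)) (fderiv ℝ F (γ t) (y - x)) t :=
        ((hF (γ t)).hasFDerivAt).comp_hasDerivAt t (hγd t)
      exact (hasDerivAt_pi.1 hcomp) i
    obtain ⟨c, hc, hceq⟩ := exists_hasDerivAt_eq_slope (fun t => F (γ t) i)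
      (fun t => fderiv ℝ F (γ t) (y - x) i) (by norm_num : (0:ℝ) < 1)
      (fun t _ => (hg t).continuousAt.continuousWithinAt)
      (fun t _ => hg t)
    refine ⟨γ c, hγS c (Set.mem_Icc_of_Ioo hc), ?_⟩
    have : γ 1 = y := by simp [hγdef]
    have h0 : γ 0 = x := by simp [hγdef]
    rw [hceq]
    simp [this, h0]
  choose ξ hξS hξ using key
  refine ⟨fun i j => fderiv ℝ F (ξ i) (Pi.single j 1) i, fun i j =>
    ⟨(hJ _ (hξS i) i j).1, (hJ _ (hξS i) i j).2⟩, ?_⟩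
  funext i
  have hsum : (y - x) = ∑ j : Fin n, (y - x) j • (Pi.single j 1 : Fin n → ℝ) := by
    funext k
    simp [Finset.sum_apply, Pi.single_apply]
  rw [Pi.sub_apply, hξ i]
  rw [show fderiv ℝ F (ξ i) (y - x) = ∑ j : Fin n, (y - x) j • fderiv ℝ F (ξ i) (Pi.single j 1) by
    conv_lhs => rw [hsum]
    simp [map_sum]]
  simp [Matrix.mulVec, dotProduct, sub_mul, Finset.sum_sub_distrib, mul_comm]
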